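/- Let N_t ≥ 1 be an integer, ρ > 0, and β = √(2ρ/N_t). Let (h_k, n_k), k = 1, 2, …, be i.i.d. pairs where h_k ∈ ℝ^{2N_t} has i.i.d. Gaussian coordinates with mean 0 and variance 1/2 and n_k is a real Gaussian with mean 0 and variance 1/2 independent of h_k. Let x, u ∈ ℝ^{2N_t} satisfy ‖x‖² = ‖u‖² = N_t and u ≠ x. Define y_k = √(ρ/N_t)·⟨h_k, x⟩ + n_k, s_k = sgn(y_k) (with sgn(r) = 1 if r ≥ 0 and −1 otherwise), and for v ∈ ℝ^{2N_t} let S_K(v) = ∑_{k=1}^{K} log Φ(β·s_k·⟨h_k, v⟩). Then P(S_K(x) > S_K(u)) → 1 as K → ∞. -/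

import Mathlib

open MeasureTheory ProbabilityTheory Filter
open scoped BigOperators ENNReal

/-- The standard normal cumulative distribution function
`Φ(t) = ∫_{−∞}^{t} (1/√(2π)) e^{−τ²/2} dτ`. -/
noncomputable def stdNormalCDF (t : ℝ) : ℝ :=
  ∫ τ in Set.Iic t, (Real.sqrt (2 * Real.pi))⁻¹ * Real.exp (-τ ^ 2 / 2)


namespace StdAux

open Set
open scoped NNReal

noncomputable def sgd (τ : ℝ) : ℝ := (Real.sqrt (2 * Real.pi))⁻¹ * Real.exp (-τ ^ 2 / 2)

lemma sgd_pos (τ : ℝ) : 0 < sgd τ := by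
  unfold sgd
  positivity

lemma sgd_integrable : Integrable sgd := by
  have h : Integrable fun x : ℝ => Real.exp (-(1/2 : ℝ) * x ^ 2) :=
    integrable_exp_neg_mul_sq (by norm_num)
  have := h.const_mul (Real.sqrt (2 * Real.pi))⁻¹
  refine this.congr (Eventually.of_forall fun x => ?_)
  unfold sgd; ring_nf

lemma integral_sgd : ∫ τ, sgd τ = 1 := by
  have h : ∫ x : ℝ, Real.exp (-(1/2 : ℝ) * x ^ 2) = Real.sqrt (Real.pi / (1/2)) :=
    integral_gaussian (1/2)
  unfold sgd
  rw [MeasureTheory.integral_const_mul]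
  have : (fun x : ℝ => Real.exp (-x ^ 2 / 2)) = fun x : ℝ => Real.exp (-(1/2 : ℝ) * x ^ 2) := by
    funext x; ring_nf
  rw [this, h]
  have h2 : Real.pi / (1/2) = 2 * Real.pi := by ring
  rw [h2, inv_mul_cancel₀]
  positivity

lemma sgd_even (τ : ℝ) : sgd (-τ) = sgd τ := by unfold sgd; ring_nf

lemma stdNormalCDF_eq (t : ℝ) : stdNormalCDF t = ∫ τ in Iic t, sgd τ := rfl

lemma stdNormalCDF_mono : Monotone stdNormalCDF := by
  intro a b hab
  rw [stdNormalCDF_eq, stdNormalCDF_eq]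
  refine setIntegral_mono_set sgd_integrable.integrableOn
    (Eventually.of_forall fun x => (sgd_pos x).le) (HasSubset.Subset.eventuallyLE (Iic_subset_Iic.2 hab))

lemma measurable_stdNormalCDF : Measurable stdNormalCDF := stdNormalCDF_mono.measurable

/-- Lower bound for integral of sgd over an interval. -/
lemma sgd_setIntegral_Ioc_pos {a b : ℝ} (hab : a < b) : 0 < ∫ τ in Ioc a b, sgd τ := by
  set M : ℝ := max |a| |b| with hM
  have hbound : ∀ x ∈ Ioc a b, (Real.sqrt (2 * Real.pi))⁻¹ * Real.exp (-(M ^ 2) / 2) ≤ sgd x := by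
    intro x hx
    have h1 : |x| ≤ M := by
      rw [abs_le]
      constructor
      · have := neg_abs_le a; have := hx.1; simp only [hM]
        have : -|a| ≤ a := neg_abs_le a
        have := le_max_left |a| |b|
        nlinarith [hx.1.le]
      · have := le_abs_self b; have := le_max_right |a| |b|
        nlinarith [hx.2]
    have hx2 : x ^ 2 ≤ M ^ 2 := by
      have := abs_nonneg x
      nlinarith [sq_abs x]
    unfold sgd
    have : Real.exp (-(M ^ 2) / 2) ≤ Real.exp (-x ^ 2 / 2) := by
      apply Real.exp_le_exp.2; linarith
    have hs : (0:ℝ) < (Real.sqrt (2 * Real.pi))⁻¹ := by positivity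
    nlinarith
  have hmeas : MeasurableSet (Ioc a b) := measurableSet_Ioc
  have hfin : (volume (Ioc a b)) ≠ ⊤ := by
    rw [Real.volume_Ioc]; exact ENNReal.ofReal_ne_top
  have := setIntegral_ge_of_const_le hmeas hfin hbound sgd_integrable.integrableOn
  have hvol : (volume (Ioc a b)).toReal = b - a := by
    rw [Real.volume_Ioc, ENNReal.toReal_ofReal (by linarith)]
  rw [measureReal_def, hvol, smul_eq_mul] at this
  have hc : 0 < (Real.sqrt (2 * Real.pi))⁻¹ * Real.exp (-(M ^ 2) / 2) := by positivity
  nlinarith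

lemma stdNormalCDF_strictMono : StrictMono stdNormalCDF := by
  intro a b hab
  have hsplit : stdNormalCDF b = stdNormalCDF a + ∫ τ in Ioc a b, sgd τ := by
    rw [stdNormalCDF_eq, stdNormalCDF_eq, ← MeasureTheory.setIntegral_union]
    · rw [Iic_union_Ioc_eq_Iic hab.le]
    · exact Iic_disjoint_Ioc le_rfl
    · exact measurableSet_Ioc
    · exact sgd_integrable.integrableOn
    · exact sgd_integrable.integrableOn
  rw [hsplit]
  have := sgd_setIntegral_Ioc_pos hab
  linarith

lemma stdNormalCDF_pos (t : ℝ) : 0 < stdNormalCDF t := by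
  have h1 : ∫ τ in Ioc (t-1) t, sgd τ ≤ stdNormalCDF t := by
    rw [stdNormalCDF_eq]
    refine setIntegral_mono_set sgd_integrable.integrableOn
      (Eventually.of_forall fun x => (sgd_pos x).le)
      (HasSubset.Subset.eventuallyLE Ioc_subset_Iic_self)
  have := sgd_setIntegral_Ioc_pos (show t - 1 < t by linarith)
  linarith

lemma stdNormalCDF_neg (t : ℝ) : stdNormalCDF (-t) = 1 - stdNormalCDF t := by
  have h1 : stdNormalCDF (-t) = ∫ τ in Ioi t, sgd τ := by
    rw [stdNormalCDF_eq]
    have : ∫ τ in Iic (-t), sgd τ = ∫ τ in Iic (-t), sgd (-τ) := by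
      refine setIntegral_congr_fun measurableSet_Iic fun x _ => (sgd_even x).symm
    rw [this, integral_comp_neg_Iic, neg_neg]
  have h2 : stdNormalCDF t + ∫ τ in Ioi t, sgd τ = 1 := by
    rw [stdNormalCDF_eq]
    have hcompl : (Iic t)ᶜ = Ioi t := compl_Iic
    rw [← hcompl, integral_add_compl measurableSet_Iic sgd_integrable, integral_sgd]
  linarith

lemma stdNormalCDF_lt_one (t : ℝ) : stdNormalCDF t < 1 := by
  have := stdNormalCDF_pos (-t)
  rw [stdNormalCDF_neg] at this
  linarith

lemma log_stdNormalCDF_bound (t : ℝ) :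
    |Real.log (stdNormalCDF t)| ≤ t ^ 2 + 1 + Real.log (Real.sqrt (2 * Real.pi)) := by
  have hpos := stdNormalCDF_pos t
  have hlt := stdNormalCDF_lt_one t
  have hlog_nonpos : Real.log (stdNormalCDF t) ≤ 0 := Real.log_nonpos hpos.le hlt.le
  rw [abs_of_nonpos hlog_nonpos]
  -- lower bound on stdNormalCDF t : ≥ (√(2π))⁻¹ * exp (-(|t|+1)^2/2)
  have h1 : ∫ τ in Ioc (t-1) t, sgd τ ≤ stdNormalCDF t := by
    rw [stdNormalCDF_eq]
    refine setIntegral_mono_set sgd_integrable.integrableOn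
      (Eventually.of_forall fun x => (sgd_pos x).le)
      (HasSubset.Subset.eventuallyLE Ioc_subset_Iic_self)
  have hbound : ∀ x ∈ Ioc (t-1) t, (Real.sqrt (2 * Real.pi))⁻¹ * Real.exp (-((|t|+1) ^ 2) / 2) ≤ sgd x := by
    intro x hx
    have h1x : x ^ 2 ≤ (|t|+1) ^ 2 := by
      have ha := abs_nonneg t
      have hb := le_abs_self t
      have hc := neg_abs_le t
      nlinarith [hx.1, hx.2]
    unfold sgd
    have : Real.exp (-((|t|+1) ^ 2) / 2) ≤ Real.exp (-x ^ 2 / 2) := by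
      apply Real.exp_le_exp.2; linarith
    have hs : (0:ℝ) < (Real.sqrt (2 * Real.pi))⁻¹ := by positivity
    nlinarith
  have hmeas : MeasurableSet (Ioc (t-1) t) := measurableSet_Ioc
  have hfin : (volume (Ioc (t-1) t)) ≠ ⊤ := by rw [Real.volume_Ioc]; exact ENNReal.ofReal_ne_top
  have h2 := setIntegral_ge_of_const_le hmeas hfin hbound sgd_integrable.integrableOn
  have hvol : (volume (Ioc (t-1) t)).toReal = 1 := by
    rw [Real.volume_Ioc]
    norm_num
  rw [measureReal_def, hvol, one_smul] at h2
  have h3 : (Real.sqrt (2 * Real.pi))⁻¹ * Real.exp (-((|t|+1) ^ 2) / 2) ≤ stdNormalCDF t := le_trans h2 h1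
  have h4 : Real.log ((Real.sqrt (2 * Real.pi))⁻¹ * Real.exp (-((|t|+1) ^ 2) / 2)) ≤ Real.log (stdNormalCDF t) := by
    apply Real.log_le_log (by positivity) h3
  rw [Real.log_mul (by positivity) (Real.exp_ne_zero _), Real.log_inv, Real.log_exp] at h4
  have habs : (|t|+1) ^ 2 ≤ 2 * t ^ 2 + 2 := by
    have h5 : (|t|+1) ^ 2 = t ^ 2 + 2 * |t| + 1 := by rw [add_sq, sq_abs, one_pow, mul_one]
    have h6 : (0:ℝ) ≤ (|t|-1) ^ 2 := sq_nonneg _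
    have h7 : (|t|-1) ^ 2 = t ^ 2 - 2 * |t| + 1 := by rw [sub_sq, sq_abs, one_pow, mul_one]
    linarith
  linarith [h4]

/-- Bernoulli KL positivity. -/
lemma kl_nonneg {p q : ℝ} (hp0 : 0 < p) (hp1 : p < 1) (hq0 : 0 < q) (hq1 : q < 1) :
    0 ≤ p * (Real.log p - Real.log q) + (1 - p) * (Real.log (1 - p) - Real.log (1 - q)) := by
  have h1 : Real.log q - Real.log p = Real.log (q / p) := (Real.log_div hq0.ne' hp0.ne').symm
  have h2 : Real.log (1 - q) - Real.log (1 - p) = Real.log ((1 - q) / (1 - p)) :=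
    (Real.log_div (by linarith) (by linarith)).symm
  have h3 : Real.log (q / p) ≤ q / p - 1 := Real.log_le_sub_one_of_pos (by positivity)
  have h4 : Real.log ((1 - q) / (1 - p)) ≤ (1 - q) / (1 - p) - 1 :=
    Real.log_le_sub_one_of_pos (by apply div_pos <;> linarith)
  have e1 : p * (q / p - 1) = q - p := by field_simp
  have e2 : (1 - p) * ((1 - q) / (1 - p) - 1) = p - q := by
    have : (1:ℝ) - p ≠ 0 := by linarith
    field_simp
    ring
  nlinarith [mul_le_mul_of_nonneg_left h3 hp0.le, mul_le_mul_of_nonneg_left h4 (by linarith : (0:ℝ) ≤ 1 - p)]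

lemma kl_pos {p q : ℝ} (hp0 : 0 < p) (hp1 : p < 1) (hq0 : 0 < q) (hq1 : q < 1) (hne : p ≠ q) :
    0 < p * (Real.log p - Real.log q) + (1 - p) * (Real.log (1 - p) - Real.log (1 - q)) := by
  have h1 : Real.log q - Real.log p = Real.log (q / p) := (Real.log_div hq0.ne' hp0.ne').symm
  have h2 : Real.log (1 - q) - Real.log (1 - p) = Real.log ((1 - q) / (1 - p)) :=
    (Real.log_div (by linarith) (by linarith)).symm
  have h3 : Real.log (q / p) < q / p - 1 := by
    apply Real.log_lt_sub_one_of_pos (by positivity)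
    intro hcon
    apply hne
    field_simp at hcon
    linarith
  have h4 : Real.log ((1 - q) / (1 - p)) ≤ (1 - q) / (1 - p) - 1 :=
    Real.log_le_sub_one_of_pos (by apply div_pos <;> linarith)
  have e1 : p * (q / p - 1) = q - p := by field_simp
  have e2 : (1 - p) * ((1 - q) / (1 - p) - 1) = p - q := by
    have : (1:ℝ) - p ≠ 0 := by linarith
    field_simp
    ring
  nlinarith [mul_lt_mul_of_pos_left h3 hp0, mul_le_mul_of_nonneg_left h4 (by linarith : (0:ℝ) ≤ 1 - p)]

lemma pdf_half (x : ℝ) :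
    gaussianPDFReal 0 (1/2 : ℝ≥0) x = (Real.sqrt Real.pi)⁻¹ * Real.exp (-x ^ 2) := by
  unfold gaussianPDFReal
  have h1 : (2 : ℝ) * Real.pi * ((1/2 : ℝ≥0) : ℝ) = Real.pi := by
    push_cast; ring
  have h2 : (2 : ℝ) * ((1/2 : ℝ≥0) : ℝ) = 1 := by push_cast; ring
  rw [h1]
  congr 1
  rw [sub_zero]
  congr 1
  rw [h2]
  ring

lemma sgd_sqrt2 (x : ℝ) : sgd (Real.sqrt 2 * x) =
    (Real.sqrt 2)⁻¹ * ((Real.sqrt Real.pi)⁻¹ * Real.exp (-x ^ 2)) := by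
  unfold sgd
  have h2 : Real.sqrt 2 * Real.sqrt Real.pi = Real.sqrt (2 * Real.pi) := by
    rw [← Real.sqrt_mul (by norm_num)]
  have hs2 : (0:ℝ) < Real.sqrt 2 := by positivity
  have hsp : (0:ℝ) < Real.sqrt Real.pi := Real.sqrt_pos.2 Real.pi_pos
  have h3 : (Real.sqrt 2 * x) ^ 2 = 2 * x ^ 2 := by
    rw [mul_pow, Real.sq_sqrt (by norm_num : (0:ℝ) ≤ 2)]
  rw [h3, ← h2]
  rw [mul_inv]
  have : -(2 * x ^ 2) / 2 = -x ^ 2 := by ring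
  rw [this]
  ring

lemma gaussian_half_Ici (c : ℝ) :
    (gaussianReal 0 (1/2 : ℝ≥0)) (Ici (-c)) = ENNReal.ofReal (stdNormalCDF (Real.sqrt 2 * c)) := by
  rw [gaussianReal_apply_eq_integral 0 (by norm_num : (1/2 : ℝ≥0) ≠ 0)]
  congr 1
  have key : stdNormalCDF (Real.sqrt 2 * c) = ∫ x in Ici (-c), gaussianPDFReal 0 (1/2 : ℝ≥0) x := by
    rw [stdNormalCDF_eq]
    have e1 : ∫ τ in Iic (Real.sqrt 2 * c), sgd τ = ∫ τ in Iic (Real.sqrt 2 * c), sgd (-τ) := by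
      refine setIntegral_congr_fun measurableSet_Iic fun y _ => (sgd_even y).symm
    rw [e1, integral_comp_neg_Iic]
    have e2 : ∫ x in Ioi (-(Real.sqrt 2 * c)), sgd x = ∫ x in Ioi (Real.sqrt 2 * (-c)), sgd x := by
      norm_num
    rw [e2]
    have e3 := integral_comp_mul_left_Ioi sgd (-c) (by positivity : (0:ℝ) < Real.sqrt 2)
    have hs2 : (0:ℝ) < Real.sqrt 2 := by positivity
    have e4 : ∫ x in Ioi (Real.sqrt 2 * (-c)), sgd x
        = Real.sqrt 2 • ∫ x in Ioi (-c), sgd (Real.sqrt 2 * x) := by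
      rw [e3, smul_smul, mul_inv_cancel₀ hs2.ne', one_smul]
    rw [e4, integral_Ici_eq_integral_Ioi, ← integral_smul]
    refine setIntegral_congr_fun measurableSet_Ioi fun y _ => ?_
    rw [sgd_sqrt2, pdf_half, smul_eq_mul, ← mul_assoc, mul_inv_cancel₀ hs2.ne', one_mul]
  rw [key]

lemma gaussian_Ioo_ne_zero (m : ℝ) {v : ℝ≥0} (hv : v ≠ 0) {a b : ℝ} (hab : a < b) :
    gaussianReal m v (Ioo a b) ≠ 0 := by
  rw [gaussianReal_apply_eq_integral m hv]
  have hvpos : (0:ℝ) < (v : ℝ) := by positivity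
  set M : ℝ := max |a - m| |b - m| with hM
  set cc : ℝ := (Real.sqrt (2 * Real.pi * v))⁻¹ * Real.exp (-(M ^ 2) / (2 * v)) with hcc
  have hccpos : 0 < cc := by
    rw [hcc]; positivity
  have hbound : ∀ x ∈ Ioo a b, cc ≤ gaussianPDFReal m v x := by
    intro x hx
    unfold gaussianPDFReal
    have h1 : |x - m| ≤ M := by
      rw [abs_le]
      constructor
      · have := neg_abs_le (a - m); have := le_max_left |a - m| |b - m|
        nlinarith [hx.1]
      · have := le_abs_self (b - m); have := le_max_right |a - m| |b - m|
        nlinarith [hx.2]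
    have h2 : (x - m) ^ 2 ≤ M ^ 2 := by nlinarith [sq_abs (x - m), abs_nonneg (x - m)]
    have h3 : Real.exp (-(M ^ 2) / (2 * v)) ≤ Real.exp (-(x - m) ^ 2 / (2 * v)) := by
      apply Real.exp_le_exp.2
      apply div_le_div_of_nonneg_right ?_ (by positivity)
      exact neg_le_neg h2
    rw [hcc]
    have hs : (0:ℝ) < (Real.sqrt (2 * Real.pi * v))⁻¹ := by positivity
    nlinarith
  have hmeas : MeasurableSet (Ioo a b) := measurableSet_Ioo
  have hfin : volume (Ioo a b) ≠ ⊤ := by rw [Real.volume_Ioo]; exact ENNReal.ofReal_ne_top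
  have h2 := setIntegral_ge_of_const_le hmeas hfin hbound
    (integrable_gaussianPDFReal m v).integrableOn
  have hvol : (volume (Ioo a b)).toReal = b - a := by
    rw [Real.volume_Ioo, ENNReal.toReal_ofReal (by linarith)]
  rw [measureReal_def, hvol, smul_eq_mul] at h2
  have : 0 < ∫ x in Ioo a b, gaussianPDFReal m v x := by nlinarith
  simp only [ne_eq, ENNReal.ofReal_eq_zero, not_le]
  exact this

lemma integrable_sq_gaussian {v : ℝ≥0} (hv : v ≠ 0) :
    Integrable (fun x : ℝ => x ^ 2) (gaussianReal 0 v) := by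
  rw [gaussianReal_of_var_ne_zero 0 hv]
  rw [integrable_withDensity_iff (measurable_gaussianPDF 0 v)
    (Eventually.of_forall fun x => ENNReal.ofReal_lt_top)]
  have hvpos : (0:ℝ) < (v : ℝ) := by positivity
  have hb : (0:ℝ) < 1 / (2 * v) := by positivity
  have key : Integrable (fun x : ℝ => x ^ (2:ℝ) * Real.exp (-(1/(2*(v:ℝ))) * x ^ 2)) :=
    integrable_rpow_mul_exp_neg_mul_sq hb (by norm_num)
  have key2 : Integrable (fun x : ℝ => x ^ 2 * Real.exp (-(1/(2*(v:ℝ))) * x ^ 2)) := by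
    refine key.congr (Eventually.of_forall fun x => ?_)
    simp only [show ((2:ℝ)) = ((2:ℕ):ℝ) by norm_num, Real.rpow_natCast]
  have key3 := key2.mul_const (Real.sqrt (2 * Real.pi * v))⁻¹
  refine key3.congr (Eventually.of_forall fun x => ?_)
  simp only [gaussianPDF, ENNReal.toReal_ofReal (gaussianPDFReal_nonneg 0 v x)]
  unfold gaussianPDFReal
  rw [sub_zero]
  have : -(1/(2*(v:ℝ))) * x ^ 2 = -x ^ 2 / (2 * v) := by ring
  rw [this]
  ring

lemma pi_map_eval {m : ℕ} (ν : Measure ℝ) [IsProbabilityMeasure ν] (i : Fin m) :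
    (Measure.pi fun _ : Fin m => ν).map (fun h => h i) = ν := by
  ext s hs
  rw [Measure.map_apply (measurable_pi_apply i) hs]
  have hpre : (fun h : Fin m → ℝ => h i) ⁻¹' s
      = Set.pi univ (Function.update (fun _ => univ) i s) := by
    rw [Set.eval_preimage]
  rw [hpre, Measure.pi_pi]
  rw [Finset.prod_eq_single i]
  · rw [Function.update_self]
  · intro j _ hj
    rw [Function.update_of_ne hj]
    exact measure_univ
  · intro hi
    exact absurd (Finset.mem_univ i) hi

variable {d : ℕ}

noncomputable def Zfun (β γ : ℝ) (x u : Fin d → ℝ) (p : (Fin d → ℝ) × ℝ) : ℝ :=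
  Real.log (stdNormalCDF (β * (if 0 ≤ γ * (∑ i, p.1 i * x i) + p.2 then (1:ℝ) else -1)
    * ∑ i, p.1 i * x i)) -
  Real.log (stdNormalCDF (β * (if 0 ≤ γ * (∑ i, p.1 i * x i) + p.2 then (1:ℝ) else -1)
    * ∑ i, p.1 i * u i))

noncomputable def Gfun (β : ℝ) (x u : Fin d → ℝ) (h : Fin d → ℝ) : ℝ :=
  stdNormalCDF (β * ∑ i, h i * x i) *
    (Real.log (stdNormalCDF (β * ∑ i, h i * x i))
      - Real.log (stdNormalCDF (β * ∑ i, h i * u i)))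
  + stdNormalCDF (-(β * ∑ i, h i * x i)) *
    (Real.log (stdNormalCDF (-(β * ∑ i, h i * x i)))
      - Real.log (stdNormalCDF (-(β * ∑ i, h i * u i))))

noncomputable def piG (d : ℕ) : Measure (Fin d → ℝ) :=
  Measure.pi fun _ : Fin d => gaussianReal 0 (1/2 : ℝ≥0)

noncomputable def νG : Measure ℝ := gaussianReal 0 (1/2 : ℝ≥0)

noncomputable def μprod (d : ℕ) : Measure ((Fin d → ℝ) × ℝ) := (piG d).prod νG

instance : IsProbabilityMeasure (piG d) := by unfold piG; infer_instance
instance : IsProbabilityMeasure νG := by unfold νG; infer_instance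
instance : IsProbabilityMeasure (μprod d) := by unfold μprod; infer_instance

lemma measurable_inner (v : Fin d → ℝ) : Measurable (fun h : Fin d → ℝ => ∑ i, h i * v i) :=
  Finset.measurable_sum _ fun i _ => (measurable_pi_apply i).mul_const _

lemma measurable_Zfun (β γ : ℝ) (x u : Fin d → ℝ) : Measurable (Zfun β γ x u) := by
  have hset : MeasurableSet {p : (Fin d → ℝ) × ℝ | 0 ≤ γ * (∑ i, p.1 i * x i) + p.2} :=
    measurableSet_le measurable_const
      ((((measurable_inner x).comp measurable_fst).const_mul γ).add measurable_snd)
  have hsgn : Measurable (fun p : (Fin d → ℝ) × ℝ =>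
      (if 0 ≤ γ * (∑ i, p.1 i * x i) + p.2 then (1:ℝ) else -1)) :=
    Measurable.ite hset measurable_const measurable_const
  have hx : Measurable fun p : (Fin d → ℝ) × ℝ => (∑ i, p.1 i * x i) :=
    (measurable_inner x).comp measurable_fst
  have hu : Measurable fun p : (Fin d → ℝ) × ℝ => (∑ i, p.1 i * u i) :=
    (measurable_inner u).comp measurable_fst
  exact (Real.measurable_log.comp (measurable_stdNormalCDF.comp
      (((hsgn.const_mul β)).mul hx))).sub
    (Real.measurable_log.comp (measurable_stdNormalCDF.comp (((hsgn.const_mul β)).mul hu)))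

lemma integrable_sq_eval (d : ℕ) (i : Fin d) :
    Integrable (fun h : Fin d → ℝ => (h i) ^ 2) (piG d) := by
  have hmap := pi_map_eval (gaussianReal 0 (1/2 : ℝ≥0)) i
  have hint : Integrable (fun x : ℝ => x ^ 2) ((piG d).map (fun h => h i)) := by
    unfold piG; rw [hmap]; exact integrable_sq_gaussian (by norm_num)
  exact (integrable_map_measure (measurable_id.pow_const 2).aestronglyMeasurable
    (measurable_pi_apply i).aemeasurable).mp hint

lemma integrable_sq_sum (d : ℕ) :
    Integrable (fun p : (Fin d → ℝ) × ℝ => ∑ i, (p.1 i) ^ 2) (μprod d) := by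
  refine integrable_finset_sum _ fun i _ => ?_
  have hmap : (μprod d).map Prod.fst = piG d := by
    unfold μprod; rw [Measure.map_fst_prod]; simp
  have hint : Integrable (fun h : Fin d → ℝ => (h i) ^ 2) ((μprod d).map Prod.fst) := by
    rw [hmap]; exact integrable_sq_eval d i
  exact (integrable_map_measure ((measurable_pi_apply i).pow_const 2).aestronglyMeasurable
    measurable_fst.aemeasurable).mp hint

lemma integrable_Zfun (β γ : ℝ) (x u : Fin d → ℝ) : Integrable (Zfun β γ x u) (μprod d) := by
  set C : ℝ := β ^ 2 * ((∑ i, (x i) ^ 2) + (∑ i, (u i) ^ 2)) with hC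
  have hD : Integrable (fun p : (Fin d → ℝ) × ℝ =>
      C * (∑ i, (p.1 i) ^ 2) + (2 + 2 * Real.log (Real.sqrt (2 * Real.pi)))) (μprod d) :=
    ((integrable_sq_sum d).const_mul C).add (integrable_const _)
  refine hD.mono' (measurable_Zfun β γ x u).aestronglyMeasurable
    (Eventually.of_forall fun p => ?_)
  set sg : ℝ := (if 0 ≤ γ * (∑ i, p.1 i * x i) + p.2 then (1:ℝ) else -1) with hsg
  have hsg2 : sg ^ 2 = 1 := by
    rw [hsg]; split_ifs <;> norm_num
  set a' : ℝ := ∑ i, p.1 i * x i with ha'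
  set b' : ℝ := ∑ i, p.1 i * u i with hb'
  have hZ : Zfun β γ x u p = Real.log (stdNormalCDF (β * sg * a'))
      - Real.log (stdNormalCDF (β * sg * b')) := rfl
  have hb1 := log_stdNormalCDF_bound (β * sg * a')
  have hb2 := log_stdNormalCDF_bound (β * sg * b')
  have ht1 : (β * sg * a') ^ 2 = β ^ 2 * a' ^ 2 := by
    rw [mul_pow, mul_pow, hsg2]; ring
  have ht2 : (β * sg * b') ^ 2 = β ^ 2 * b' ^ 2 := by
    rw [mul_pow, mul_pow, hsg2]; ring
  have hcs1 : a' ^ 2 ≤ (∑ i, (p.1 i) ^ 2) * (∑ i, (x i) ^ 2) := by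
    have := Finset.sum_mul_sq_le_sq_mul_sq Finset.univ (fun i => p.1 i) (fun i => x i)
    simpa [ha'] using this
  have hcs2 : b' ^ 2 ≤ (∑ i, (p.1 i) ^ 2) * (∑ i, (u i) ^ 2) := by
    have := Finset.sum_mul_sq_le_sq_mul_sq Finset.univ (fun i => p.1 i) (fun i => u i)
    simpa [hb'] using this
  have hβ2 : (0:ℝ) ≤ β ^ 2 := sq_nonneg β
  rw [hZ]
  have habs : |Real.log (stdNormalCDF (β * sg * a')) - Real.log (stdNormalCDF (β * sg * b'))|
      ≤ |Real.log (stdNormalCDF (β * sg * a'))| + |Real.log (stdNormalCDF (β * sg * b'))| :=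
    abs_sub _ _
  rw [Real.norm_eq_abs]
  have key : |Real.log (stdNormalCDF (β * sg * a'))| + |Real.log (stdNormalCDF (β * sg * b'))|
      ≤ C * (∑ i, (p.1 i) ^ 2) + (2 + 2 * Real.log (Real.sqrt (2 * Real.pi))) := by
    have e1 : (β * sg * a') ^ 2 ≤ β ^ 2 * ((∑ i, (p.1 i) ^ 2) * (∑ i, (x i) ^ 2)) := by
      rw [ht1]; exact mul_le_mul_of_nonneg_left hcs1 hβ2
    have e2 : (β * sg * b') ^ 2 ≤ β ^ 2 * ((∑ i, (p.1 i) ^ 2) * (∑ i, (u i) ^ 2)) := by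
      rw [ht2]; exact mul_le_mul_of_nonneg_left hcs2 hβ2
    rw [hC]
    nlinarith [hb1, hb2]
  exact le_trans habs key


lemma inner_integral (β γ : ℝ) (hβγ : Real.sqrt 2 * γ = β) (x u : Fin d → ℝ) (h : Fin d → ℝ) :
    ∫ nn, Zfun β γ x u (h, nn) ∂νG = Gfun β x u h := by
  set a' : ℝ := ∑ i, h i * x i with ha'
  set b' : ℝ := ∑ i, h i * u i with hb'
  set A : ℝ := Real.log (stdNormalCDF (β * a')) - Real.log (stdNormalCDF (β * b')) with hA
  set B : ℝ := Real.log (stdNormalCDF (-(β * a'))) - Real.log (stdNormalCDF (-(β * b'))) with hB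
  have hfun : (fun nn : ℝ => Zfun β γ x u (h, nn))
      = fun nn => B + Set.indicator (Ici (-(γ * a'))) (fun _ => A - B) nn := by
    funext nn
    by_cases hc : 0 ≤ γ * a' + nn
    · have hmem : nn ∈ Ici (-(γ * a')) := by
        simp only [mem_Ici]; linarith
      have e1 : β * (1:ℝ) * a' = β * a' := by ring
      have e2 : β * (1:ℝ) * b' = β * b' := by ring
      simp only [Zfun, ← ha', ← hb', if_pos hc, Set.indicator_of_mem hmem, e1, e2]
      ring
    · have hmem : nn ∉ Ici (-(γ * a')) := by
        simp only [mem_Ici, not_le]; by_contra hcon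
        push_neg at hcon; apply hc; linarith
      have e1 : β * (-1:ℝ) * a' = -(β * a') := by ring
      have e2 : β * (-1:ℝ) * b' = -(β * b') := by ring
      simp only [Zfun, ← ha', ← hb', if_neg hc, Set.indicator_of_notMem hmem, e1, e2]
      ring
  rw [hfun]
  rw [integral_add (integrable_const B)
    ((integrable_const (A - B)).indicator measurableSet_Ici)]
  rw [integral_const, integral_indicator_const _ measurableSet_Ici]
  have hmeasIci : νG (Ici (-(γ * a'))) = ENNReal.ofReal (stdNormalCDF (β * a')) := by
    unfold νG
    rw [gaussian_half_Ici (γ * a')]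
    congr 1
    rw [← mul_assoc, hβγ]
  rw [measureReal_def, measureReal_def, hmeasIci]
  have hp := stdNormalCDF_pos (β * a')
  rw [ENNReal.toReal_ofReal hp.le]
  simp only [measure_univ, ENNReal.toReal_one, smul_eq_mul, one_smul]
  have hnegx : stdNormalCDF (-(β * a')) = 1 - stdNormalCDF (β * a') := stdNormalCDF_neg _
  unfold Gfun
  rw [← ha', ← hb', hnegx, hA, hB, hnegx]
  ring

lemma Gfun_nonneg (β : ℝ) (x u : Fin d → ℝ) (h : Fin d → ℝ) : 0 ≤ Gfun β x u h := by
  unfold Gfun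
  rw [stdNormalCDF_neg (β * ∑ i, h i * x i), stdNormalCDF_neg (β * ∑ i, h i * u i)]
  exact kl_nonneg (stdNormalCDF_pos _) (stdNormalCDF_lt_one _)
    (stdNormalCDF_pos _) (stdNormalCDF_lt_one _)

lemma Gfun_pos {β : ℝ} (hβ : 0 < β) (x u : Fin d → ℝ) (h : Fin d → ℝ)
    (hne : (∑ i, h i * x i) ≠ ∑ i, h i * u i) : 0 < Gfun β x u h := by
  unfold Gfun
  rw [stdNormalCDF_neg (β * ∑ i, h i * x i), stdNormalCDF_neg (β * ∑ i, h i * u i)]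
  refine kl_pos (stdNormalCDF_pos _) (stdNormalCDF_lt_one _)
    (stdNormalCDF_pos _) (stdNormalCDF_lt_one _) ?_
  intro hcon
  apply hne
  have := stdNormalCDF_strictMono.injective hcon
  exact mul_left_cancel₀ hβ.ne' this

lemma integral_Gfun_pos {β : ℝ} (hβ : 0 < β) (x u : Fin d → ℝ) (hxu : x ≠ u)
    (hGint : Integrable (Gfun β x u) (piG d)) :
    0 < ∫ h, Gfun β x u h ∂(piG d) := by
  rw [integral_pos_iff_support_of_nonneg (fun h => Gfun_nonneg β x u h) hGint]
  -- find a box of positive measure inside the support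
  set w : Fin d → ℝ := fun i => x i - u i with hw
  have hwne : ∃ i, w i ≠ 0 := by
    by_contra hcon
    push_neg at hcon
    apply hxu
    funext i
    have := hcon i
    rw [hw] at this
    simpa [sub_eq_zero] using this
  obtain ⟨i0, hi0⟩ := hwne
  set W : ℝ := ∑ i, (w i) ^ 2 with hW
  have hWpos : 0 < W := by
    rw [hW]
    refine Finset.sum_pos' (fun i _ => sq_nonneg _) ⟨i0, Finset.mem_univ i0, ?_⟩
    positivity
  set sAbs : ℝ := ∑ i, |w i| with hsAbs
  have hsAbsnn : 0 ≤ sAbs := Finset.sum_nonneg fun i _ => abs_nonneg _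
  set δ : ℝ := W / (2 * sAbs + 1) with hδ
  have hδpos : 0 < δ := by rw [hδ]; positivity
  have hδs : δ * sAbs < W := by
    rw [hδ, div_mul_eq_mul_div, div_lt_iff₀ (by linarith)]
    nlinarith
  set Box : Set (Fin d → ℝ) := Set.pi univ (fun i => Ioo (w i - δ) (w i + δ)) with hBox
  have hsubset : Box ⊆ Function.support (Gfun β x u) := by
    intro h hh
    have hmem : ∀ i, h i ∈ Ioo (w i - δ) (w i + δ) := by
      intro i
      exact hh i (mem_univ i)
    have hdiff : ∀ i, |h i - w i| ≤ δ := by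
      intro i
      have := hmem i
      rw [abs_le]
      constructor <;> [linarith [this.1]; linarith [this.2]]
    have hsum : ∑ i, h i * w i = W + ∑ i, (h i - w i) * w i := by
      rw [hW, ← Finset.sum_add_distrib]
      refine Finset.sum_congr rfl fun i _ => by ring
    have hE : |∑ i, (h i - w i) * w i| ≤ δ * sAbs := by
      calc |∑ i, (h i - w i) * w i| ≤ ∑ i, |(h i - w i) * w i| :=
            Finset.abs_sum_le_sum_abs _ _
        _ ≤ ∑ i, δ * |w i| := by
            refine Finset.sum_le_sum fun i _ => ?_
            rw [abs_mul]
            exact mul_le_mul_of_nonneg_right (hdiff i) (abs_nonneg _)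
        _ = δ * sAbs := by rw [hsAbs, Finset.mul_sum]
    have hpos : 0 < ∑ i, h i * w i := by
      have h1 : -(δ * sAbs) ≤ ∑ i, (h i - w i) * w i := neg_le_of_abs_le hE
      rw [hsum]; linarith
    have hne : (∑ i, h i * x i) ≠ ∑ i, h i * u i := by
      intro hcon
      have : ∑ i, h i * w i = (∑ i, h i * x i) - ∑ i, h i * u i := by
        rw [← Finset.sum_sub_distrib]
        refine Finset.sum_congr rfl fun i _ => ?_
        rw [hw]; ring
      rw [this, hcon, sub_self] at hpos
      exact lt_irrefl 0 hpos
    exact (Gfun_pos hβ x u h hne).ne'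
  have hBoxpos : 0 < piG d Box := by
    rw [hBox]
    unfold piG
    rw [Measure.pi_pi]
    rw [pos_iff_ne_zero, Finset.prod_ne_zero_iff]
    intro i _
    exact gaussian_Ioo_ne_zero 0 (by norm_num) (by linarith)
  exact lt_of_lt_of_le hBoxpos (measure_mono hsubset)

lemma integral_Zfun_pos {β γ : ℝ} (hβ : 0 < β) (hβγ : Real.sqrt 2 * γ = β)
    (x u : Fin d → ℝ) (hxu : x ≠ u) :
    0 < ∫ p, Zfun β γ x u p ∂(μprod d) := by
  have hint := integrable_Zfun β γ x u (d := d)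
  have hGint : Integrable (Gfun β x u) (piG d) := by
    have := (hint : Integrable _ ((piG d).prod νG)).integral_prod_left
    refine this.congr (Eventually.of_forall fun h => ?_)
    exact inner_integral β γ hβγ x u h
  rw [show μprod d = (piG d).prod νG from rfl] at hint ⊢
  rw [integral_prod _ hint]
  have : (fun h => ∫ nn, Zfun β γ x u (h, nn) ∂νG) = Gfun β x u :=
    funext fun h => inner_integral β γ hβγ x u h
  rw [this]
  exact integral_Gfun_pos hβ x u hxu hGint

/-- If a.e. point is eventually in the (measurable) sets `A K`, probabilities tend to 1. -/
lemma tendsto_prob_of_ae_eventually {Ω : Type*} [MeasurableSpace Ω] (P : Measure Ω)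
    [IsProbabilityMeasure P] (A : ℕ → Set Ω) (hA : ∀ K, MeasurableSet (A K))
    (hae : ∀ᵐ ω ∂P, ∀ᶠ K in atTop, ω ∈ A K) :
    Tendsto (fun K => P (A K)) atTop (nhds 1) := by
  set B : ℕ → Set Ω := fun K => ⋂ j, ⋂ (_ : K ≤ j), A j with hB
  have hBmeas : ∀ K, MeasurableSet (B K) := fun K =>
    MeasurableSet.iInter fun j => MeasurableSet.iInter fun _ => hA j
  have hBmono : Monotone B := by
    intro K K' hKK' ω hω
    exact mem_iInter₂.2 fun j hj => mem_iInter₂.1 hω j (le_trans hKK' hj)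
  have hBsubA : ∀ K, B K ⊆ A K := fun K ω hω => mem_iInter₂.1 hω K le_rfl
  have hUnion : P (⋃ K, B K) = 1 := by
    have hsub : {ω | ¬ ∀ᶠ K in atTop, ω ∈ A K} ⊇ (⋃ K, B K)ᶜ := by
      intro ω hω
      simp only [mem_compl_iff, mem_iUnion, not_exists] at hω
      simp only [mem_setOf_eq, eventually_atTop, not_exists]
      intro K hK
      exact hω K (mem_iInter₂.2 fun j hj => hK j hj)
    have hzero : P {ω | ¬ ∀ᶠ K in atTop, ω ∈ A K} = 0 := by
      rw [← compl_setOf]  -- maybe unnecessary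
      exact hae
    have : P ((⋃ K, B K)ᶜ) = 0 := measure_mono_null hsub hzero
    have hmeas : MeasurableSet (⋃ K, B K) := MeasurableSet.iUnion hBmeas
    rwa [prob_compl_eq_zero_iff hmeas] at this
  have htend : Tendsto (fun K => P (B K)) atTop (nhds (P (⋃ K, B K))) :=
    tendsto_measure_iUnion_atTop hBmono
  rw [hUnion] at htend
  refine tendsto_of_tendsto_of_tendsto_of_le_of_le htend tendsto_const_nhds
    (fun K => measure_mono (hBsubA K)) (fun K => prob_le_one)

end StdAux

open StdAux Set

/-- Lemma 2 (real-domain form): with i.i.d. channel/noise pairs, the sign-refined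
log-likelihood sum at the true transmitted vector `x` exceeds that at any other vector `u`
on the sphere with probability tending to one as the number `K` of nodes grows. -/
theorem loglik_comparison_tendsto_one (Ω : Type*) [MeasurableSpace Ω]
    (P : Measure Ω) [IsProbabilityMeasure P] (Nt : ℕ) (hNt : 1 ≤ Nt) (ρ : ℝ) (hρ : 0 < ρ)
    (h : ℕ → Ω → Fin (2 * Nt) → ℝ) (n : ℕ → Ω → ℝ)
    (hhm : ∀ k, Measurable (h k)) (hnm : ∀ k, Measurable (n k))
    (hiid : iIndepFun
      (fun k ω => (h k ω, n k ω)) P)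
    (hlaw : ∀ k, P.map (fun ω => (h k ω, n k ω)) =
      (Measure.pi fun _ : Fin (2 * Nt) => gaussianReal 0 (1 / 2)).prod (gaussianReal 0 (1 / 2)))
    (x u : Fin (2 * Nt) → ℝ) (hx : ∑ i, (x i) ^ 2 = (Nt : ℝ))
    (hu : ∑ i, (u i) ^ 2 = (Nt : ℝ)) (hne : u ≠ x)
    (s : ℕ → Ω → ℝ)
    (hs : ∀ k ω, s k ω =
      if 0 ≤ Real.sqrt (ρ / Nt) * (∑ i, h k ω i * x i) + n k ω then (1 : ℝ) else -1)
    (S : ℕ → (Fin (2 * Nt) → ℝ) → Ω → ℝ)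
    (hS : ∀ K v ω, S K v ω = ∑ k ∈ Finset.range K,
      Real.log (stdNormalCDF (Real.sqrt (2 * ρ / Nt) * s k ω * (∑ i, h k ω i * v i)))) :
    Tendsto (fun K => P {ω | S K x ω > S K u ω}) atTop (nhds 1) := by
  have hNt0 : (0:ℝ) < (Nt : ℝ) := by
    have : (1:ℝ) ≤ (Nt:ℝ) := by exact_mod_cast hNt
    linarith
  have hβ : 0 < Real.sqrt (2 * ρ / Nt) := Real.sqrt_pos.2 (by positivity)
  have hβγ : Real.sqrt 2 * Real.sqrt (ρ / Nt) = Real.sqrt (2 * ρ / Nt) := by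
    rw [← Real.sqrt_mul (by norm_num : (0:ℝ) ≤ 2)]
    congr 1
    ring
  have hxu : x ≠ u := fun hcon => hne hcon.symm
  have pairmeas : ∀ k, Measurable (fun ω => (h k ω, n k ω)) :=
    fun k => (hhm k).prodMk (hnm k)
  set β : ℝ := Real.sqrt (2 * ρ / Nt)
  set γ : ℝ := Real.sqrt (ρ / Nt)
  have hZf : Measurable (Zfun β γ x u (d := 2 * Nt)) := measurable_Zfun β γ x u
  have hZmeas : ∀ k, Measurable (Zfun β γ x u ∘ (fun ω => (h k ω, n k ω))) :=
    fun k => hZf.comp (pairmeas k)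
  have hlaw' : ∀ k, P.map (fun ω => (h k ω, n k ω)) = μprod (2 * Nt) := fun k => by
    rw [hlaw k]; rfl
  -- sum identity
  have hsum : ∀ K ω, S K x ω - S K u ω
      = ∑ k ∈ Finset.range K, (Zfun β γ x u ∘ (fun ω' => (h k ω', n k ω'))) ω := by
    intro K ω
    rw [hS, hS, ← Finset.sum_sub_distrib]
    refine Finset.sum_congr rfl fun k _ => ?_
    rw [hs k ω]
    rfl
  have hseteq : ∀ K, {ω | S K x ω > S K u ω}
      = {ω | 0 < ∑ k ∈ Finset.range K, (Zfun β γ x u ∘ (fun ω' => (h k ω', n k ω'))) ω} := by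
    intro K
    ext ω
    simp only [mem_setOf_eq, gt_iff_lt, ← hsum K ω, sub_pos]
  -- independence, identical distribution, integrability
  have hind : Pairwise (Function.onFun (IndepFun · · P)
      (fun k => Zfun β γ x u ∘ (fun ω => (h k ω, n k ω)))) := fun i j hij =>
    (hiid.indepFun hij).comp hZf hZf
  have hident : ∀ k, IdentDistrib (Zfun β γ x u ∘ (fun ω => (h k ω, n k ω)))
      (Zfun β γ x u ∘ (fun ω => (h 0 ω, n 0 ω))) P P := fun k =>
    ⟨(hZmeas k).aemeasurable, (hZmeas 0).aemeasurable, by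
      rw [← Measure.map_map hZf (pairmeas k), ← Measure.map_map hZf (pairmeas 0),
        hlaw' k, hlaw' 0]⟩
  have hint : Integrable (Zfun β γ x u ∘ (fun ω => (h 0 ω, n 0 ω))) P := by
    have h1 : Integrable (Zfun β γ x u) (P.map (fun ω => (h 0 ω, n 0 ω))) := by
      rw [hlaw' 0]; exact integrable_Zfun β γ x u
    exact (integrable_map_measure hZf.aestronglyMeasurable (pairmeas 0).aemeasurable).mp h1
  have hmean : 0 < ∫ ω, (Zfun β γ x u ∘ (fun ω' => (h 0 ω', n 0 ω'))) ω ∂P := by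
    have e : ∫ ω, (Zfun β γ x u ∘ (fun ω' => (h 0 ω', n 0 ω'))) ω ∂P
        = ∫ p, Zfun β γ x u p ∂(μprod (2 * Nt)) := by
      rw [← hlaw' 0, integral_map (pairmeas 0).aemeasurable hZf.aestronglyMeasurable]
      rfl
    rw [e]
    exact integral_Zfun_pos hβ hβγ x u hxu
  -- strong law
  have hlln := strong_law_ae_real (fun k => Zfun β γ x u ∘ (fun ω => (h k ω, n k ω)))
    hint hind hident
  have hae : ∀ᵐ ω ∂P, ∀ᶠ K in atTop,
      ω ∈ {ω' | 0 < ∑ k ∈ Finset.range K,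
        (Zfun β γ x u ∘ (fun ω'' => (h k ω'', n k ω''))) ω'} := by
    filter_upwards [hlln] with ω hω
    have hpos := (tendsto_order.1 hω).1 0 hmean
    filter_upwards [hpos, eventually_ge_atTop 1] with K hK hK1
    have hKpos : (0:ℝ) < (K:ℝ) := by exact_mod_cast hK1
    have hmul := mul_pos hK hKpos
    rw [div_mul_cancel₀ _ hKpos.ne'] at hmul
    exact hmul
  have hAmeas : ∀ K, MeasurableSet {ω | 0 < ∑ k ∈ Finset.range K,
      (Zfun β γ x u ∘ (fun ω' => (h k ω', n k ω'))) ω} :=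
    fun K => measurableSet_lt measurable_const
      (Finset.measurable_sum _ fun k _ => hZmeas k)
  have hfinal := tendsto_prob_of_ae_eventually P _ hAmeas hae
  have heq : (fun K => P {ω | S K x ω > S K u ω})
      = fun K => P {ω | 0 < ∑ k ∈ Finset.range K,
        (Zfun β γ x u ∘ (fun ω' => (h k ω', n k ω'))) ω} :=
    funext fun K => congrArg P (hseteq K)
  rw [heq]
  exact hfinal
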